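/- Let N, M ≥ 1, let Ξ, Λ ∈ M_N(ℂ) be constant matrices with no common eigenvalue and Ξ invertible, and let η: ℝ² → ℂ^{N×M}, θ: ℝ² → ℂ^{M×N}, Ω: ℝ² → M_N(ℂ), A: ℝ² → M_M(ℂ) be differentiable functions of (τ, σ) with Ω pointwise invertible, such that at every point: Ξ·Ω − Ω·Λ = η·θ; ∂_σ η = Ξ·(∂_τ η) + η·A; and ∂_σ θ = (∂_τ θ)·Λ − A·θ. Then W := I_M − θ·Ω⁻¹·Ξ⁻¹·η and Z := θ·Ω⁻¹·η satisfy ∂_σ W + (∂_τ Z)·W = W·A − A·W. -/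

import Mathlib

noncomputable section

/-- Entrywise partial derivative in the first coordinate `τ` of `ℝ²`. -/
def pdτ {a b : Type*} (f : ℝ × ℝ → Matrix a b ℂ) (p : ℝ × ℝ) : Matrix a b ℂ :=
  Matrix.of fun i j => deriv (fun s => f (s, p.2) i j) p.1

/-- Entrywise partial derivative in the second coordinate `σ` of `ℝ²`. -/
def pdσ {a b : Type*} (f : ℝ × ℝ → Matrix a b ℂ) (p : ℝ × ℝ) : Matrix a b ℂ :=
  Matrix.of fun i j => deriv (fun s => f (p.1, s) i j) p.2

open Matrix Polynomial

namespace QD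

lemma diffτ {f : ℝ × ℝ → ℂ} (hf : Differentiable ℝ f) (t : ℝ) :
    Differentiable ℝ fun s : ℝ => f (s, t) :=
  hf.comp (differentiable_id.prodMk (differentiable_const t))

lemma diffσ {f : ℝ × ℝ → ℂ} (hf : Differentiable ℝ f) (t : ℝ) :
    Differentiable ℝ fun s : ℝ => f (t, s) :=
  hf.comp ((differentiable_const t).prodMk differentiable_id)

lemma diff_prod {ι : Type*} (u : Finset ι) (f : ι → ℝ × ℝ → ℂ)
    (h : ∀ i ∈ u, Differentiable ℝ (f i)) :
    Differentiable ℝ fun z => ∏ i ∈ u, f i z := by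
  classical
  induction u using Finset.cons_induction with
  | empty => simpa using differentiable_const (1 : ℂ)
  | cons a s ha ih =>
    simp only [Finset.prod_cons]
    exact (h a (Finset.mem_cons_self a s)).mul (ih fun i hi => h i (Finset.mem_cons_of_mem hi))

lemma diff_mul {a n c : Type*} [Fintype n] (f : ℝ × ℝ → Matrix a n ℂ) (g : ℝ × ℝ → Matrix n c ℂ)
    (hf : ∀ i j, Differentiable ℝ fun z => f z i j) (hg : ∀ i j, Differentiable ℝ fun z => g z i j) :
    ∀ i j, Differentiable ℝ fun z => (f z * g z) i j := by
  intro i j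
  simp only [Matrix.mul_apply]
  exact Differentiable.fun_sum fun k _ => (hf i k).mul (hg k j)

lemma pdτ_mul {a n c : Type*} [Fintype n] (f : ℝ × ℝ → Matrix a n ℂ) (g : ℝ × ℝ → Matrix n c ℂ)
    (hf : ∀ i j, Differentiable ℝ fun z => f z i j) (hg : ∀ i j, Differentiable ℝ fun z => g z i j)
    (p : ℝ × ℝ) :
    pdτ (fun z => f z * g z) p = pdτ f p * g p + f p * pdτ g p := by
  ext i j
  simp only [pdτ, Matrix.of_apply, Matrix.add_apply, Matrix.mul_apply]
  calc deriv (fun s => ∑ k, f (s, p.2) i k * g (s, p.2) k j) p.1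
      = ∑ k, deriv (fun s => f (s, p.2) i k * g (s, p.2) k j) p.1 :=
        deriv_fun_sum fun k _ =>
          (((diffτ (hf i k) p.2).mul (diffτ (hg k j) p.2)) p.1 : DifferentiableAt ℝ _ _)
    _ = ∑ k, (deriv (fun s => f (s, p.2) i k) p.1 * g (p.1, p.2) k j
          + f (p.1, p.2) i k * deriv (fun s => g (s, p.2) k j) p.1) := by
        refine Finset.sum_congr rfl fun k _ => ?_
        exact deriv_mul ((diffτ (hf i k) p.2) p.1) ((diffτ (hg k j) p.2) p.1)
    _ = _ := by rw [Finset.sum_add_distrib]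

lemma pdσ_mul {a n c : Type*} [Fintype n] (f : ℝ × ℝ → Matrix a n ℂ) (g : ℝ × ℝ → Matrix n c ℂ)
    (hf : ∀ i j, Differentiable ℝ fun z => f z i j) (hg : ∀ i j, Differentiable ℝ fun z => g z i j)
    (p : ℝ × ℝ) :
    pdσ (fun z => f z * g z) p = pdσ f p * g p + f p * pdσ g p := by
  ext i j
  simp only [pdσ, Matrix.of_apply, Matrix.add_apply, Matrix.mul_apply]
  calc deriv (fun s => ∑ k, f (p.1, s) i k * g (p.1, s) k j) p.2
      = ∑ k, deriv (fun s => f (p.1, s) i k * g (p.1, s) k j) p.2 :=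
        deriv_fun_sum fun k _ =>
          (((diffσ (hf i k) p.1).mul (diffσ (hg k j) p.1)) p.2 : DifferentiableAt ℝ _ _)
    _ = ∑ k, (deriv (fun s => f (p.1, s) i k) p.2 * g (p.1, p.2) k j
          + f (p.1, p.2) i k * deriv (fun s => g (p.1, s) k j) p.2) := by
        refine Finset.sum_congr rfl fun k _ => ?_
        exact deriv_mul ((diffσ (hf i k) p.1) p.2) ((diffσ (hg k j) p.1) p.2)
    _ = _ := by rw [Finset.sum_add_distrib]

lemma pdτ_const {a b : Type*} (C : Matrix a b ℂ) (p : ℝ × ℝ) :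
    pdτ (fun _ => C) p = 0 := by
  ext i j
  simp [pdτ]

lemma pdσ_const {a b : Type*} (C : Matrix a b ℂ) (p : ℝ × ℝ) :
    pdσ (fun _ => C) p = 0 := by
  ext i j
  simp [pdσ]

lemma pdτ_sub {a b : Type*} (f g : ℝ × ℝ → Matrix a b ℂ)
    (hf : ∀ i j, Differentiable ℝ fun z => f z i j) (hg : ∀ i j, Differentiable ℝ fun z => g z i j)
    (p : ℝ × ℝ) : pdτ (fun z => f z - g z) p = pdτ f p - pdτ g p := by
  ext i j
  simp only [pdτ, Matrix.of_apply, Matrix.sub_apply]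
  exact deriv_sub ((diffτ (hf i j) p.2) p.1) ((diffτ (hg i j) p.2) p.1)

lemma pdσ_sub {a b : Type*} (f g : ℝ × ℝ → Matrix a b ℂ)
    (hf : ∀ i j, Differentiable ℝ fun z => f z i j) (hg : ∀ i j, Differentiable ℝ fun z => g z i j)
    (p : ℝ × ℝ) : pdσ (fun z => f z - g z) p = pdσ f p - pdσ g p := by
  ext i j
  simp only [pdσ, Matrix.of_apply, Matrix.sub_apply]
  exact deriv_sub ((diffσ (hf i j) p.1) p.2) ((diffσ (hg i j) p.1) p.2)

lemma pdσ_one_sub {a : Type*} [Fintype a] [DecidableEq a] (f : ℝ × ℝ → Matrix a a ℂ)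
    (p : ℝ × ℝ) : pdσ (fun z => 1 - f z) p = -pdσ f p := by
  ext i j
  simp only [pdσ, Matrix.of_apply, Matrix.sub_apply, Matrix.neg_apply]
  exact deriv_const_sub _

lemma diff_inv {n : ℕ} (Ω : ℝ × ℝ → Matrix (Fin n) (Fin n) ℂ)
    (hd : ∀ i j, Differentiable ℝ fun z => Ω z i j) (hu : ∀ z, IsUnit (Ω z)) :
    ∀ i j, Differentiable ℝ fun z => (Ω z)⁻¹ i j := by
  have hdet : Differentiable ℝ fun z => (Ω z).det := by
    simp only [Matrix.det_apply']
    refine Differentiable.fun_sum fun σ _ => ?_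
    have h1 : Differentiable ℝ fun z => ∏ i, Ω z (σ i) i :=
      diff_prod Finset.univ (fun i z => Ω z (σ i) i) fun i _ => hd (σ i) i
    exact h1.const_mul _
  have hdet0 : ∀ z, (Ω z).det ≠ 0 := fun z =>
    ((Matrix.isUnit_iff_isUnit_det _).mp (hu z)).ne_zero
  intro i j
  have hadj : Differentiable ℝ fun z => (Ω z).adjugate i j := by
    have hup : ∀ k l, Differentiable ℝ fun z => (Ω z).updateRow j (Pi.single i 1) k l := by
      intro k l
      rcases eq_or_ne k j with rfl | hk
      · simpa [Matrix.updateRow_apply] using differentiable_const (Pi.single i (1:ℂ) l)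
      · simpa [Matrix.updateRow_apply, hk] using hd k l
    simp only [Matrix.adjugate_apply, Matrix.det_apply']
    refine Differentiable.fun_sum fun σ _ => ?_
    have h1 : Differentiable ℝ fun z => ∏ l, (Ω z).updateRow j (Pi.single i 1) (σ l) l :=
      diff_prod Finset.univ (fun l z => (Ω z).updateRow j (Pi.single i 1) (σ l) l)
        fun l _ => hup (σ l) l
    exact h1.const_mul _
  have hrw : (fun z => (Ω z)⁻¹ i j) = fun z => ((Ω z).det)⁻¹ * (Ω z).adjugate i j := by
    funext z
    rw [Matrix.inv_def, Matrix.smul_apply, Ring.inverse_eq_inv, smul_eq_mul]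
  rw [hrw]
  exact (hdet.inv hdet0).mul hadj


lemma mem_spectrum_of_root {n : ℕ} (Λ : Matrix (Fin n) (Fin n) ℂ) (μ : ℂ)
    (h : (Matrix.charpoly Λ).eval μ = 0) : μ ∈ spectrum ℂ Λ := by
  rw [spectrum.mem_iff, Matrix.isUnit_iff_isUnit_det, isUnit_iff_ne_zero, not_not]
  have hmat : (charmatrix Λ).map (Polynomial.evalRingHom μ)
      = algebraMap ℂ (Matrix (Fin n) (Fin n) ℂ) μ - Λ := by
    ext i j
    rcases eq_or_ne i j with rfl | hij
    · simp [Matrix.map_apply, charmatrix_apply_eq, Matrix.algebraMap_eq_diagonal,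
        Matrix.sub_apply, Matrix.diagonal_apply_eq]
    · simp [Matrix.map_apply, charmatrix_apply_ne _ _ _ hij, Matrix.algebraMap_eq_diagonal,
        Matrix.sub_apply, Matrix.diagonal_apply_ne _ hij]
  rw [← hmat]
  have : (Λ.charmatrix.map ⇑(evalRingHom μ)) = (evalRingHom μ).mapMatrix Λ.charmatrix := rfl
  rw [this, ← RingHom.map_det]
  simpa [Matrix.charpoly] using h

lemma sylvester_eq_zero {n : ℕ} (hn : 0 < n) (Ξ Λ : Matrix (Fin n) (Fin n) ℂ)
    (hdisj : spectrum ℂ Ξ ∩ spectrum ℂ Λ = ∅)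
    {X : Matrix (Fin n) (Fin n) ℂ} (hX : Ξ * X = X * Λ) : X = 0 := by
  have hpow : ∀ k : ℕ, Ξ ^ k * X = X * Λ ^ k := by
    intro k
    induction k with
    | zero => simp
    | succ k ih =>
      calc Ξ ^ (k + 1) * X = Ξ ^ k * (Ξ * X) := by rw [pow_succ, mul_assoc]
        _ = Ξ ^ k * (X * Λ) := by rw [hX]
        _ = (Ξ ^ k * X) * Λ := by rw [mul_assoc]
        _ = X * Λ ^ k * Λ := by rw [ih]
        _ = X * Λ ^ (k + 1) := by rw [mul_assoc, ← pow_succ]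
  have haeval : ∀ p : ℂ[X], Polynomial.aeval Ξ p * X = X * Polynomial.aeval Λ p := by
    intro p
    induction p using Polynomial.induction_on' with
    | add p q hp hq => simp [map_add, add_mul, mul_add, hp, hq]
    | monomial k a =>
      simp only [Polynomial.aeval_monomial]
      calc algebraMap ℂ _ a * Ξ ^ k * X = algebraMap ℂ _ a * (Ξ ^ k * X) := by rw [mul_assoc]
        _ = algebraMap ℂ _ a * (X * Λ ^ k) := by rw [hpow]
        _ = (algebraMap ℂ _ a * X) * Λ ^ k := by rw [mul_assoc]
        _ = (X * algebraMap ℂ _ a) * Λ ^ k := by rw [Algebra.commutes]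
        _ = X * (algebraMap ℂ _ a * Λ ^ k) := by rw [mul_assoc]
  have h0 : Polynomial.aeval Ξ (Matrix.charpoly Λ) * X = 0 := by
    rw [haeval, Matrix.aeval_self_charpoly, mul_zero]
  have hdeg : 0 < (Matrix.charpoly Λ).degree := by
    rw [Matrix.charpoly_degree_eq_dim, Fintype.card_fin]
    exact_mod_cast hn
  have hunit : IsUnit (Polynomial.aeval Ξ (Matrix.charpoly Λ)) := by
    by_contra hcon
    have h0m : (0 : ℂ) ∈ spectrum ℂ (Polynomial.aeval Ξ (Matrix.charpoly Λ)) :=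
      (spectrum.zero_mem_iff (R := ℂ)).mpr hcon
    rw [spectrum.map_polynomial_aeval_of_degree_pos Ξ _ hdeg] at h0m
    obtain ⟨μ, hμ1, hμ2⟩ := h0m
    have hmem : μ ∈ spectrum ℂ Ξ ∩ spectrum ℂ Λ := ⟨hμ1, mem_spectrum_of_root Λ μ hμ2⟩
    rw [hdisj] at hmem
    exact hmem
  obtain ⟨u, hu⟩ := hunit
  calc X = 1 * X := (one_mul X).symm
    _ = (↑u⁻¹ * ↑u) * X := by rw [u.inv_mul]
    _ = ↑u⁻¹ * (↑u * X) := mul_assoc _ _ _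
    _ = (↑u⁻¹ : Matrix (Fin n) (Fin n) ℂ) * 0 := by rw [hu, h0]
    _ = 0 := mul_zero _

end QD

/-- **Key identity for the quasi-determinant dressing of the ASDYM hierarchy.**
Under the Cauchy matrix scheme (Sylvester equation `ΞΩ − ΩΛ = ηθ`, dispersion
relations for `η, θ`), the quasi-determinants `W = I − θΩ⁻¹Ξ⁻¹η` and `Z = θΩ⁻¹η`
satisfy `∂_σ W + (∂_τ Z)W = [W, A]`. -/
theorem quasideterminant_dressing_identity (N M : ℕ) (hN : 1 ≤ N) (hM : 1 ≤ M)
    (Ξ Λ : Matrix (Fin N) (Fin N) ℂ)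
    (hΞΛ : spectrum ℂ Ξ ∩ spectrum ℂ Λ = ∅)
    (hΞ : IsUnit Ξ)
    (η : ℝ × ℝ → Matrix (Fin N) (Fin M) ℂ)
    (θ : ℝ × ℝ → Matrix (Fin M) (Fin N) ℂ)
    (Ω : ℝ × ℝ → Matrix (Fin N) (Fin N) ℂ)
    (A : ℝ × ℝ → Matrix (Fin M) (Fin M) ℂ)
    (hηd : ∀ i j, Differentiable ℝ fun z => η z i j)
    (hθd : ∀ i j, Differentiable ℝ fun z => θ z i j)
    (hΩd : ∀ i j, Differentiable ℝ fun z => Ω z i j)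
    (hAd : ∀ i j, Differentiable ℝ fun z => A z i j)
    (hΩinv : ∀ z, IsUnit (Ω z))
    (hSyl : ∀ z, Ξ * Ω z - Ω z * Λ = η z * θ z)
    (hη : ∀ z, pdσ η z = Ξ * pdτ η z + η z * A z)
    (hθ : ∀ z, pdσ θ z = pdτ θ z * Λ - A z * θ z) :
    ∀ z, pdσ (fun y => (1 : Matrix (Fin M) (Fin M) ℂ) - θ y * (Ω y)⁻¹ * Ξ⁻¹ * η y) z
      + pdτ (fun y => θ y * (Ω y)⁻¹ * η y) z
        * ((1 : Matrix (Fin M) (Fin M) ℂ) - θ z * (Ω z)⁻¹ * Ξ⁻¹ * η z)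
      = ((1 : Matrix (Fin M) (Fin M) ℂ) - θ z * (Ω z)⁻¹ * Ξ⁻¹ * η z) * A z
        - A z * ((1 : Matrix (Fin M) (Fin M) ℂ) - θ z * (Ω z)⁻¹ * Ξ⁻¹ * η z) := by
  intro z
  classical
  -- basic unit facts
  have hdΞ : IsUnit Ξ.det := (Matrix.isUnit_iff_isUnit_det _).mp hΞ
  have hΞB : Ξ * Ξ⁻¹ = 1 := Matrix.mul_nonsing_inv _ hdΞ
  have hBΞ : Ξ⁻¹ * Ξ = 1 := Matrix.nonsing_inv_mul _ hdΞ
  have hdΩ : ∀ y, IsUnit (Ω y).det := fun y => (Matrix.isUnit_iff_isUnit_det _).mp (hΩinv y)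
  have hΩG : ∀ y, Ω y * (Ω y)⁻¹ = 1 := fun y => Matrix.mul_nonsing_inv _ (hdΩ y)
  have hGΩ : ∀ y, (Ω y)⁻¹ * Ω y = 1 := fun y => Matrix.nonsing_inv_mul _ (hdΩ y)
  have hGd : ∀ i j, Differentiable ℝ fun y => (Ω y)⁻¹ i j := QD.diff_inv Ω hΩd hΩinv
  have hBd : ∀ (i j : Fin N), Differentiable ℝ fun _ : ℝ × ℝ => (Ξ⁻¹ : Matrix (Fin N) (Fin N) ℂ) i j :=
    fun i j => differentiable_const _
  -- cancellation helpers
  have hcΞ : ∀ (m : Type) (X : Matrix (Fin N) m ℂ), Ξ * (Ξ⁻¹ * X) = X := by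
    intro m X; rw [← Matrix.mul_assoc, hΞB, Matrix.one_mul]
  have hcB : ∀ (m : Type) (X : Matrix (Fin N) m ℂ), Ξ⁻¹ * (Ξ * X) = X := by
    intro m X; rw [← Matrix.mul_assoc, hBΞ, Matrix.one_mul]
  have hcΩ : ∀ (m : Type) (X : Matrix (Fin N) m ℂ), Ω z * ((Ω z)⁻¹ * X) = X := by
    intro m X; rw [← Matrix.mul_assoc, hΩG, Matrix.one_mul]
  have hcG : ∀ (m : Type) (X : Matrix (Fin N) m ℂ), (Ω z)⁻¹ * (Ω z * X) = X := by
    intro m X; rw [← Matrix.mul_assoc, hGΩ, Matrix.one_mul]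
  -- derivative of the inverse
  have hGτ : pdτ (fun y => (Ω y)⁻¹) z = -((Ω z)⁻¹ * (pdτ Ω z * (Ω z)⁻¹)) := by
    have h1 : (fun y => Ω y * (Ω y)⁻¹) = fun _ : ℝ × ℝ => (1 : Matrix (Fin N) (Fin N) ℂ) :=
      funext fun y => hΩG y
    have h2 : pdτ (fun y => Ω y * (Ω y)⁻¹) z
        = pdτ Ω z * (Ω z)⁻¹ + Ω z * pdτ (fun y => (Ω y)⁻¹) z :=
      QD.pdτ_mul Ω (fun y => (Ω y)⁻¹) hΩd hGd z
    rw [h1, QD.pdτ_const] at h2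
    have h4 : Ω z * pdτ (fun y => (Ω y)⁻¹) z = -(pdτ Ω z * (Ω z)⁻¹) :=
      eq_neg_of_add_eq_zero_right h2.symm
    calc pdτ (fun y => (Ω y)⁻¹) z
        = (Ω z)⁻¹ * (Ω z * pdτ (fun y => (Ω y)⁻¹) z) := (hcG _ _).symm
      _ = (Ω z)⁻¹ * -(pdτ Ω z * (Ω z)⁻¹) := by rw [h4]
      _ = -((Ω z)⁻¹ * (pdτ Ω z * (Ω z)⁻¹)) := by rw [Matrix.mul_neg]
  have hGσ : pdσ (fun y => (Ω y)⁻¹) z = -((Ω z)⁻¹ * (pdσ Ω z * (Ω z)⁻¹)) := by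
    have h1 : (fun y => Ω y * (Ω y)⁻¹) = fun _ : ℝ × ℝ => (1 : Matrix (Fin N) (Fin N) ℂ) :=
      funext fun y => hΩG y
    have h2 : pdσ (fun y => Ω y * (Ω y)⁻¹) z
        = pdσ Ω z * (Ω z)⁻¹ + Ω z * pdσ (fun y => (Ω y)⁻¹) z :=
      QD.pdσ_mul Ω (fun y => (Ω y)⁻¹) hΩd hGd z
    rw [h1, QD.pdσ_const] at h2
    have h4 : Ω z * pdσ (fun y => (Ω y)⁻¹) z = -(pdσ Ω z * (Ω z)⁻¹) :=
      eq_neg_of_add_eq_zero_right h2.symm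
    calc pdσ (fun y => (Ω y)⁻¹) z
        = (Ω z)⁻¹ * (Ω z * pdσ (fun y => (Ω y)⁻¹) z) := (hcG _ _).symm
      _ = (Ω z)⁻¹ * -(pdσ Ω z * (Ω z)⁻¹) := by rw [h4]
      _ = -((Ω z)⁻¹ * (pdσ Ω z * (Ω z)⁻¹)) := by rw [Matrix.mul_neg]
  -- differentiated Sylvester equation, τ direction
  have hΞΩd : ∀ i j, Differentiable ℝ fun y => (Ξ * Ω y) i j :=
    QD.diff_mul (fun _ => Ξ) Ω (fun i j => differentiable_const _) hΩd
  have hΩΛd : ∀ i j, Differentiable ℝ fun y => (Ω y * Λ) i j :=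
    QD.diff_mul Ω (fun _ => Λ) hΩd (fun i j => differentiable_const _)
  have hSylτ : Ξ * pdτ Ω z - pdτ Ω z * Λ = pdτ η z * θ z + η z * pdτ θ z := by
    have h1 : (fun y => Ξ * Ω y - Ω y * Λ) = fun y => η y * θ y := funext hSyl
    have h2 : pdτ (fun y => Ξ * Ω y - Ω y * Λ) z = pdτ (fun y => η y * θ y) z :=
      congrArg (fun f => pdτ f z) h1
    have e1 : pdτ (fun y => Ξ * Ω y - Ω y * Λ) z
        = pdτ (fun y => Ξ * Ω y) z - pdτ (fun y => Ω y * Λ) z :=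
      QD.pdτ_sub (fun y => Ξ * Ω y) (fun y => Ω y * Λ) hΞΩd hΩΛd z
    have e2 : pdτ (fun y => Ξ * Ω y) z = pdτ (fun _ : ℝ × ℝ => Ξ) z * Ω z + Ξ * pdτ Ω z :=
      QD.pdτ_mul (fun _ => Ξ) Ω (fun i j => differentiable_const _) hΩd z
    have e3 : pdτ (fun y => Ω y * Λ) z = pdτ Ω z * Λ + Ω z * pdτ (fun _ : ℝ × ℝ => Λ) z :=
      QD.pdτ_mul Ω (fun _ => Λ) hΩd (fun i j => differentiable_const _) z
    have e4 : pdτ (fun y => η y * θ y) z = pdτ η z * θ z + η z * pdτ θ z :=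
      QD.pdτ_mul η θ hηd hθd z
    rw [e1, e2, e3, e4, QD.pdτ_const, QD.pdτ_const] at h2
    rw [Matrix.zero_mul, Matrix.mul_zero, zero_add, add_zero] at h2
    exact h2
  have hSylσ : Ξ * pdσ Ω z - pdσ Ω z * Λ = pdσ η z * θ z + η z * pdσ θ z := by
    have h1 : (fun y => Ξ * Ω y - Ω y * Λ) = fun y => η y * θ y := funext hSyl
    have h2 : pdσ (fun y => Ξ * Ω y - Ω y * Λ) z = pdσ (fun y => η y * θ y) z :=
      congrArg (fun f => pdσ f z) h1
    have e1 : pdσ (fun y => Ξ * Ω y - Ω y * Λ) z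
        = pdσ (fun y => Ξ * Ω y) z - pdσ (fun y => Ω y * Λ) z :=
      QD.pdσ_sub (fun y => Ξ * Ω y) (fun y => Ω y * Λ) hΞΩd hΩΛd z
    have e2 : pdσ (fun y => Ξ * Ω y) z = pdσ (fun _ : ℝ × ℝ => Ξ) z * Ω z + Ξ * pdσ Ω z :=
      QD.pdσ_mul (fun _ => Ξ) Ω (fun i j => differentiable_const _) hΩd z
    have e3 : pdσ (fun y => Ω y * Λ) z = pdσ Ω z * Λ + Ω z * pdσ (fun _ : ℝ × ℝ => Λ) z :=
      QD.pdσ_mul Ω (fun _ => Λ) hΩd (fun i j => differentiable_const _) z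
    have e4 : pdσ (fun y => η y * θ y) z = pdσ η z * θ z + η z * pdσ θ z :=
      QD.pdσ_mul η θ hηd hθd z
    rw [e1, e2, e3, e4, QD.pdσ_const, QD.pdσ_const] at h2
    rw [Matrix.zero_mul, Matrix.mul_zero, zero_add, add_zero] at h2
    exact h2
  -- key substitution ∂σΩ = Ξ ∂τΩ − η ∂τθ, via Sylvester uniqueness
  have hs : pdτ η z * θ z = Ξ * pdτ Ω z - pdτ Ω z * Λ - η z * pdτ θ z := by
    rw [hSylτ]; abel
  have key : Ξ * pdσ Ω z - pdσ Ω z * Λ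
      = Ξ * (Ξ * pdτ Ω z - η z * pdτ θ z) - (Ξ * pdτ Ω z - η z * pdτ θ z) * Λ := by
    rw [hSylσ, hη z, hθ z]
    simp only [Matrix.mul_add, Matrix.add_mul, Matrix.mul_sub, Matrix.sub_mul,
      Matrix.mul_assoc, hs]
    abel
  have hEeq : Ξ * (pdσ Ω z - (Ξ * pdτ Ω z - η z * pdτ θ z))
      = (pdσ Ω z - (Ξ * pdτ Ω z - η z * pdτ θ z)) * Λ := by
    rw [Matrix.mul_sub, Matrix.sub_mul]
    exact sub_eq_sub_iff_sub_eq_sub.mp key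
  have hΩσ : pdσ Ω z = Ξ * pdτ Ω z - η z * pdτ θ z := by
    have h0 := QD.sylvester_eq_zero (Nat.lt_of_lt_of_le Nat.zero_lt_one hN) Ξ Λ hΞΛ hEeq
    exact sub_eq_zero.mp h0
  -- structure identities
  have hId1 : ∀ (m : Type) (X : Matrix (Fin N) m ℂ),
      η z * (θ z * ((Ω z)⁻¹ * X)) = Ξ * X - Ω z * (Λ * ((Ω z)⁻¹ * X)) := by
    intro m X
    calc η z * (θ z * ((Ω z)⁻¹ * X)) = (η z * θ z) * ((Ω z)⁻¹ * X) := by rw [Matrix.mul_assoc]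
      _ = (Ξ * Ω z - Ω z * Λ) * ((Ω z)⁻¹ * X) := by rw [hSyl z]
      _ = Ξ * (Ω z * ((Ω z)⁻¹ * X)) - Ω z * (Λ * ((Ω z)⁻¹ * X)) := by
          rw [Matrix.sub_mul, Matrix.mul_assoc, Matrix.mul_assoc]
      _ = Ξ * X - Ω z * (Λ * ((Ω z)⁻¹ * X)) := by rw [hcΩ]
  have hId2 : ∀ (m : Type) (X : Matrix (Fin N) m ℂ),
      pdτ η z * (θ z * X) = Ξ * (pdτ Ω z * X) - pdτ Ω z * (Λ * X) - η z * (pdτ θ z * X) := by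
    intro m X
    calc pdτ η z * (θ z * X) = (pdτ η z * θ z) * X := by rw [Matrix.mul_assoc]
      _ = (Ξ * pdτ Ω z - pdτ Ω z * Λ - η z * pdτ θ z) * X := by rw [hs]
      _ = _ := by rw [Matrix.sub_mul, Matrix.sub_mul, Matrix.mul_assoc, Matrix.mul_assoc,
            Matrix.mul_assoc]
  -- differentiability of compound functions
  have hθG : ∀ i j, Differentiable ℝ fun y => (θ y * (Ω y)⁻¹) i j :=
    QD.diff_mul θ (fun y => (Ω y)⁻¹) hθd hGd
  have hθGB : ∀ i j, Differentiable ℝ fun y => (θ y * (Ω y)⁻¹ * Ξ⁻¹) i j :=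
    QD.diff_mul (fun y => θ y * (Ω y)⁻¹) (fun _ => Ξ⁻¹) hθG hBd
  -- derivative of W = 1 - θ G Ξ⁻¹ η in σ
  have pd1 : pdσ (fun y => θ y * (Ω y)⁻¹) z
      = pdσ θ z * (Ω z)⁻¹ + θ z * pdσ (fun y => (Ω y)⁻¹) z :=
    QD.pdσ_mul θ (fun y => (Ω y)⁻¹) hθd hGd z
  have pd2 : pdσ (fun y => θ y * (Ω y)⁻¹ * Ξ⁻¹) z
      = pdσ (fun y => θ y * (Ω y)⁻¹) z * Ξ⁻¹ := by
    have h2 : pdσ (fun y => θ y * (Ω y)⁻¹ * Ξ⁻¹) z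
        = pdσ (fun y => θ y * (Ω y)⁻¹) z * Ξ⁻¹
          + (θ z * (Ω z)⁻¹) * pdσ (fun _ : ℝ × ℝ => (Ξ⁻¹ : Matrix (Fin N) (Fin N) ℂ)) z :=
      QD.pdσ_mul (fun y => θ y * (Ω y)⁻¹) (fun _ => Ξ⁻¹) hθG hBd z
    rw [QD.pdσ_const, Matrix.mul_zero, add_zero] at h2
    exact h2
  have pd3 : pdσ (fun y => θ y * (Ω y)⁻¹ * Ξ⁻¹ * η y) z
      = pdσ (fun y => θ y * (Ω y)⁻¹ * Ξ⁻¹) z * η z + (θ z * (Ω z)⁻¹ * Ξ⁻¹) * pdσ η z :=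
    QD.pdσ_mul (fun y => θ y * (Ω y)⁻¹ * Ξ⁻¹) η hθGB hηd z
  have hWσ : pdσ (fun y => (1 : Matrix (Fin M) (Fin M) ℂ) - θ y * (Ω y)⁻¹ * Ξ⁻¹ * η y) z
      = -(pdσ (fun y => θ y * (Ω y)⁻¹ * Ξ⁻¹ * η y) z) :=
    QD.pdσ_one_sub (fun y => θ y * (Ω y)⁻¹ * Ξ⁻¹ * η y) z
  -- derivative of Z = θ G η in τ
  have pz1 : pdτ (fun y => θ y * (Ω y)⁻¹) z
      = pdτ θ z * (Ω z)⁻¹ + θ z * pdτ (fun y => (Ω y)⁻¹) z :=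
    QD.pdτ_mul θ (fun y => (Ω y)⁻¹) hθd hGd z
  have pz2 : pdτ (fun y => θ y * (Ω y)⁻¹ * η y) z
      = pdτ (fun y => θ y * (Ω y)⁻¹) z * η z + (θ z * (Ω z)⁻¹) * pdτ η z :=
    QD.pdτ_mul (fun y => θ y * (Ω y)⁻¹) η hθG hηd z
  -- final computation
  rw [hWσ, pd3, pd2, pd1, pz2, pz1, hGσ, hGτ, hΩσ, hθ z, hη z]
  simp only [Matrix.mul_assoc, Matrix.mul_add, Matrix.add_mul, Matrix.mul_sub, Matrix.sub_mul,
    Matrix.mul_one, Matrix.one_mul, Matrix.neg_mul, Matrix.mul_neg, neg_neg, neg_sub, neg_add,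
    hcΞ, hcB, hcΩ, hcG, hId1, hId2]
  abel


end
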